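/- Let n ≥ 3 and p ∈ (0,1). (i) If p ≤ 1/(n−1), then for every integer k with 2 ≤ k ≤ n, the maximum of P_θ(∑_{i=1}^n c_i ≥ k) over all pairwise independent distributions θ with identical marginal probability p equals n(n−1)p^2 / ( k(k−1) ). (ii) If p > 1/(n−1), then for every integer k with ⌈1 + (n−1)p⌉ ≤ k ≤ ⌊ n(n−1)p^2 / (n·p − 1) ⌋, the same maximum equals n(n−1)p^2 / ( k(k−1) ). -/

import Mathlib

open Finset

noncomputable section

/-- Probability that at least `k` of the `n` coordinates equal `1` under the pmf `θ` on `{0,1}^n`. -/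
def probGE (n : ℕ) (θ : (Fin n → Bool) → ℝ) (k : ℕ) : ℝ :=
  ∑ c ∈ Finset.univ.filter
      (fun c : Fin n → Bool => k ≤ (Finset.univ.filter (fun i => c i = true)).card), θ c

/-- Probability that all `n` coordinates equal `1` under the pmf `θ` on `{0,1}^n`. -/
def probAll (n : ℕ) (θ : (Fin n → Bool) → ℝ) : ℝ :=
  ∑ c ∈ Finset.univ.filter (fun c : Fin n → Bool => ∀ i, c i = true), θ c

/-- `θ` is a probability mass function on `{0,1}^n`. -/
def IsDist (n : ℕ) (θ : (Fin n → Bool) → ℝ) : Prop :=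
  (∀ c, 0 ≤ θ c) ∧ (∑ c, θ c = 1)

/-- Univariate marginal probability `P_θ(c_i = 1)`. -/
def Marg (n : ℕ) (θ : (Fin n → Bool) → ℝ) (i : Fin n) : ℝ :=
  ∑ c ∈ Finset.univ.filter (fun c : Fin n → Bool => c i = true), θ c

/-- Bivariate probability `P_θ(c_i = 1, c_j = 1)`. -/
def Biv (n : ℕ) (θ : (Fin n → Bool) → ℝ) (i j : Fin n) : ℝ :=
  ∑ c ∈ Finset.univ.filter (fun c : Fin n → Bool => c i = true ∧ c j = true), θ c

/-- `θ` is a pairwise independent distribution with marginal vector `p`. -/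
def PairwiseIndep (n : ℕ) (p : Fin n → ℝ) (θ : (Fin n → Bool) → ℝ) : Prop :=
  IsDist n θ ∧ (∀ i, Marg n θ i = p i) ∧
    (∀ i j : Fin n, i < j → Biv n θ i j = p i * p j)


/-- Reindex a sum over Boolean vectors as a sum over finsets. -/
lemma sum_reindex (n : ℕ) (P : Finset (Fin n) → Prop) [DecidablePred P]
    (f : Finset (Fin n) → ℝ) :
    ∑ c ∈ Finset.univ.filter
        (fun c : Fin n → Bool => P (Finset.univ.filter (fun i => c i = true))),
      f (Finset.univ.filter (fun i => c i = true))
      = ∑ s ∈ Finset.univ.filter P, f s := by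
  apply Finset.sum_nbij' (fun c => Finset.univ.filter (fun i => c i = true))
    (fun s => (fun i => decide (i ∈ s)))
  · intro c hc
    simpa using (Finset.mem_filter.mp hc).2
  · intro s hs
    simp only [Finset.mem_filter, Finset.mem_univ, true_and] at hs ⊢
    convert hs using 2
    ext i; simp
  · intro c _
    funext i; simp
  · intro s _
    ext i; simp
  · intro c _
    rfl

lemma count_supersets (n m : ℕ) (t : Finset (Fin n)) (ht : t.card ≤ m) :
    ((Finset.univ : Finset (Finset (Fin n))).filter (fun s => s.card = m ∧ t ⊆ s)).card
      = (n - t.card).choose (m - t.card) := by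
  have h1 : ((Finset.univ : Finset (Finset (Fin n))).filter (fun s => s.card = m ∧ t ⊆ s)).card
      = (Finset.powersetCard (m - t.card) tᶜ).card := by
    apply Finset.card_nbij' (fun s => s \ t) (fun u => u ∪ t)
    · intro s hs
      simp only [Finset.mem_coe, Finset.mem_filter] at hs
      rw [Finset.mem_coe, Finset.mem_powersetCard]
      constructor
      · intro x hx
        simp only [Finset.mem_sdiff] at hx
        simpa using hx.2
      · rw [Finset.card_sdiff_of_subset hs.2.2, hs.2.1]
    · intro u hu
      rw [Finset.mem_coe, Finset.mem_powersetCard] at hu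
      have hd : Disjoint u t := by
        rw [Finset.disjoint_left]
        intro x hx hxt
        have := hu.1 hx
        simp at this
        exact this hxt
      simp only [Finset.mem_coe, Finset.mem_filter, Finset.mem_univ, true_and]
      constructor
      · rw [Finset.card_union_of_disjoint hd, hu.2]
        omega
      · exact Finset.subset_union_right
    · intro s hs
      simp only [Finset.mem_coe, Finset.mem_filter] at hs
      exact Finset.sdiff_union_of_subset hs.2.2
    · intro u hu
      rw [Finset.mem_coe, Finset.mem_powersetCard] at hu
      apply Finset.union_sdiff_cancel_right
      rw [Finset.disjoint_left]
      intro x hx hxt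
      have := hu.1 hx
      simp at this
      exact this hxt
  rw [h1, Finset.card_powersetCard, Finset.card_compl, Fintype.card_fin]

noncomputable def wt (k : ℕ) (a b z : ℝ) (m : ℕ) : ℝ :=
  if m = k then a else if m = 1 then b else if m = 0 then z else 0

lemma wt_split {k : ℕ} (hk : 2 ≤ k) (a b z : ℝ) (m : ℕ) :
    wt k a b z m = (if m = k then a else 0) + (if m = 1 then b else 0)
      + (if m = 0 then z else 0) := by
  unfold wt
  rcases eq_or_ne m k with rfl | h1
  · rw [if_pos rfl, if_pos rfl, if_neg (by omega), if_neg (by omega)]; ring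
  · rcases eq_or_ne m 1 with rfl | h2
    · rw [if_neg h1, if_pos rfl, if_neg h1, if_pos rfl, if_neg (by omega)]; ring
    · rcases eq_or_ne m 0 with rfl | h3
      · simp only [if_neg h1, if_neg h2, if_pos rfl]; ring
      · simp only [if_neg h1, if_neg h2, if_neg h3]; ring

lemma sum_wt {n k : ℕ} (hk : 2 ≤ k) (a b z : ℝ) (P : Finset (Fin n) → Prop)
    [DecidablePred P] :
    ∑ s ∈ Finset.univ.filter P, wt k a b z s.card
      = a * ((Finset.univ.filter (fun s : Finset (Fin n) => s.card = k ∧ P s)).card : ℝ)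
        + b * ((Finset.univ.filter (fun s : Finset (Fin n) => s.card = 1 ∧ P s)).card : ℝ)
        + z * ((Finset.univ.filter (fun s : Finset (Fin n) => s.card = 0 ∧ P s)).card : ℝ) := by
  have key : ∀ (m : ℕ) (x : ℝ),
      ∑ s ∈ Finset.univ.filter P, (if s.card = m then x else 0)
        = x * ((Finset.univ.filter (fun s : Finset (Fin n) => s.card = m ∧ P s)).card : ℝ) := by
    intro m x
    rw [← Finset.sum_filter, Finset.filter_filter, Finset.sum_const, nsmul_eq_mul, mul_comm]
    congr 2
    apply congrArg
    apply Finset.filter_congr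
    intro s _
    simp only [and_comm]
  calc ∑ s ∈ Finset.univ.filter P, wt k a b z s.card
      = ∑ s ∈ Finset.univ.filter P, ((if s.card = k then a else 0)
          + (if s.card = 1 then b else 0) + (if s.card = 0 then z else 0)) := by
        exact Finset.sum_congr rfl fun s _ => wt_split hk a b z s.card
    _ = _ := by rw [Finset.sum_add_distrib, Finset.sum_add_distrib, key k a, key 1 b, key 0 z]
section Counts
variable {n : ℕ}

lemma count_card (m : ℕ) :
    ((Finset.univ : Finset (Finset (Fin n))).filter
      (fun s => s.card = m ∧ True)).card = n.choose m := by
  have := count_supersets n m ∅ (by simp)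
  simpa using this

lemma count_card_mem (m : ℕ) (hm : 1 ≤ m) (i : Fin n) :
    ((Finset.univ : Finset (Finset (Fin n))).filter
      (fun s => s.card = m ∧ i ∈ s)).card = (n-1).choose (m-1) := by
  have := count_supersets n m {i} (by simpa using hm)
  simp only [Finset.card_singleton, Finset.singleton_subset_iff] at this
  simpa using this

lemma count_card_mem_zero (i : Fin n) :
    ((Finset.univ : Finset (Finset (Fin n))).filter
      (fun s => s.card = 0 ∧ i ∈ s)).card = 0 := by
  rw [Finset.card_eq_zero]
  apply Finset.filter_false_of_mem
  intro s _
  rintro ⟨h0, hi⟩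
  rw [Finset.card_eq_zero] at h0
  subst h0; simp at hi

lemma count_card_mem2 (m : ℕ) (hm : 2 ≤ m) (i j : Fin n) (hij : i ≠ j) :
    ((Finset.univ : Finset (Finset (Fin n))).filter
      (fun s => s.card = m ∧ (i ∈ s ∧ j ∈ s))).card = (n-2).choose (m-2) := by
  have hc : ({i, j} : Finset (Fin n)).card = 2 := by
    rw [Finset.card_insert_of_notMem (by simpa using hij), Finset.card_singleton]
  have := count_supersets n m {i, j} (by omega)
  rw [hc] at this
  rw [← this]
  congr 1
  apply Finset.filter_congr
  intro s _
  simp [Finset.insert_subset_iff]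

lemma count_card_mem2_small (m : ℕ) (hm : m ≤ 1) (i j : Fin n) (hij : i ≠ j) :
    ((Finset.univ : Finset (Finset (Fin n))).filter
      (fun s => s.card = m ∧ (i ∈ s ∧ j ∈ s))).card = 0 := by
  rw [Finset.card_eq_zero]
  apply Finset.filter_false_of_mem
  intro s _
  rintro ⟨h0, hi, hj⟩
  have : ({i, j} : Finset (Fin n)) ⊆ s := by
    rw [Finset.insert_subset_iff, Finset.singleton_subset_iff]; exact ⟨hi, hj⟩
  have h2 := Finset.card_le_card this
  rw [Finset.card_insert_of_notMem (by simpa using hij), Finset.card_singleton] at h2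
  omega

lemma count_card_ge (k : ℕ) :
    ((Finset.univ : Finset (Finset (Fin n))).filter
      (fun s : Finset (Fin n) => s.card = k ∧ k ≤ s.card)).card = n.choose k := by
  rw [← count_card (n := n) k]
  congr 1
  apply Finset.filter_congr
  intro s _
  constructor
  · rintro ⟨h, _⟩; exact ⟨h, trivial⟩
  · rintro ⟨h, _⟩; exact ⟨h, by omega⟩

lemma count_card_ge_small (k m : ℕ) (hm : m < k) :
    ((Finset.univ : Finset (Finset (Fin n))).filter
      (fun s : Finset (Fin n) => s.card = m ∧ k ≤ s.card)).card = 0 := by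
  rw [Finset.card_eq_zero]
  apply Finset.filter_false_of_mem
  intro s _
  rintro ⟨h0, h1⟩
  omega

end Counts
-- Nat choose identities
lemma choose_id1 {n k : ℕ} (hk : 1 ≤ k) (hkn : k ≤ n) :
    (k : ℝ) * (n.choose k : ℝ) = (n : ℝ) * ((n-1).choose (k-1) : ℝ) := by
  have h := Nat.add_one_mul_choose_eq (n-1) (k-1)
  have hn1 : n - 1 + 1 = n := by omega
  have hk1 : k - 1 + 1 = k := by omega
  rw [hn1, hk1] at h
  norm_cast
  rw [mul_comm]
  exact h.symm

lemma choose_id2 {n k : ℕ} (hk : 2 ≤ k) (hkn : k ≤ n) :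
    (k : ℝ) * ((k : ℝ) - 1) * (n.choose k : ℝ)
      = (n : ℝ) * ((n : ℝ) - 1) * ((n-2).choose (k-2) : ℝ) := by
  have h1 := choose_id1 (n := n) (k := k) (by omega) hkn
  have h2 := choose_id1 (n := n-1) (k := k-1) (by omega) (by omega)
  have e1 : ((k : ℝ) - 1) = ((k - 1 : ℕ) : ℝ) := by
    rw [Nat.cast_sub (by omega)]; norm_num
  have e2 : ((n : ℝ) - 1) = ((n - 1 : ℕ) : ℝ) := by
    rw [Nat.cast_sub (by omega)]; norm_num
  have e3 : n - 1 - 1 = n - 2 := by omega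
  have e4 : k - 1 - 1 = k - 2 := by omega
  rw [e3, e4] at h2
  calc (k : ℝ) * ((k : ℝ) - 1) * (n.choose k : ℝ)
      = ((k : ℝ) - 1) * ((k : ℝ) * (n.choose k : ℝ)) := by ring
    _ = ((k : ℝ) - 1) * ((n : ℝ) * ((n-1).choose (k-1) : ℝ)) := by rw [h1]
    _ = (n : ℝ) * (((k-1 : ℕ) : ℝ) * ((n-1).choose (k-1) : ℝ)) := by rw [e1]; ring
    _ = (n : ℝ) * (((n-1 : ℕ):ℝ) * ((n-2).choose (k-2) : ℝ)) := by rw [h2]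
    _ = _ := by rw [← e2]; ring

section Extremal
variable (n k : ℕ) (q r : ℝ)

/-- The extremal (exchangeable) distribution: weight `q` spread on level `k`,
`r` on level `1`, rest at level `0`. -/
noncomputable def theta0 : (Fin n → Bool) → ℝ := fun c =>
  wt k (q / (n.choose k : ℝ)) (r / n) (1 - q - r)
    ((Finset.univ.filter (fun i => c i = true)).card)

variable {n k q r}

lemma theta0_sum (hn : 1 ≤ n) (hk : 2 ≤ k) (hkn : k ≤ n) :
    ∑ c, theta0 n k q r c = 1 := by
  have h0 : (Finset.univ : Finset (Fin n → Bool))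
      = Finset.univ.filter (fun c => (fun _ : Finset (Fin n) => True)
          (Finset.univ.filter (fun i => c i = true))) := by
    simp
  rw [h0]
  unfold theta0
  rw [sum_reindex n (fun _ => True) (fun s => wt k (q / (n.choose k : ℝ)) (r / n) (1 - q - r) s.card)]
  rw [sum_wt hk]
  rw [count_card, count_card, count_card]
  have hc : (0 : ℝ) < (n.choose k : ℝ) := by
    exact_mod_cast Nat.choose_pos hkn
  have hn' : (0:ℝ) < (n:ℝ) := by exact_mod_cast hn
  rw [Nat.choose_one_right, Nat.choose_zero_right]
  field_simp
  push_cast; ring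
lemma theta0_marg (hn : 1 ≤ n) (hk : 2 ≤ k) (hkn : k ≤ n) (i : Fin n) :
    Marg n (theta0 n k q r) i = ((k : ℝ) * q + r) / n := by
  unfold Marg theta0
  have h0 : Finset.univ.filter (fun c : Fin n → Bool => c i = true)
      = Finset.univ.filter (fun c : Fin n → Bool =>
          (fun s : Finset (Fin n) => i ∈ s) (Finset.univ.filter (fun j => c j = true))) := by
    apply Finset.filter_congr; intro c _; simp
  rw [h0, sum_reindex n (fun s => i ∈ s)
      (fun s => wt k (q / (n.choose k : ℝ)) (r / n) (1 - q - r) s.card),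
    sum_wt hk, count_card_mem k (by omega) i, count_card_mem 1 le_rfl i,
    count_card_mem_zero i]
  have hid := choose_id1 (n := n) (k := k) (by omega) hkn
  have hc : (0 : ℝ) < (n.choose k : ℝ) := by exact_mod_cast Nat.choose_pos hkn
  have hn' : (0:ℝ) < (n:ℝ) := by exact_mod_cast hn
  simp only [Nat.sub_self, Nat.choose_zero_right, Nat.cast_one, Nat.cast_zero]
  field_simp
  linear_combination (-q) * hid

lemma theta0_biv (hn : 2 ≤ n) (hk : 2 ≤ k) (hkn : k ≤ n) (i j : Fin n) (hij : i ≠ j) :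
    Biv n (theta0 n k q r) i j = q * (k : ℝ) * ((k:ℝ) - 1) / ((n : ℝ) * ((n:ℝ) - 1)) := by
  unfold Biv theta0
  have h0 : Finset.univ.filter (fun c : Fin n → Bool => c i = true ∧ c j = true)
      = Finset.univ.filter (fun c : Fin n → Bool =>
          (fun s : Finset (Fin n) => i ∈ s ∧ j ∈ s)
            (Finset.univ.filter (fun l => c l = true))) := by
    apply Finset.filter_congr; intro c _; simp
  rw [h0, sum_reindex n (fun s => i ∈ s ∧ j ∈ s)
      (fun s => wt k (q / (n.choose k : ℝ)) (r / n) (1 - q - r) s.card),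
    sum_wt hk, count_card_mem2 k hk i j hij, count_card_mem2_small 1 le_rfl i j hij,
    count_card_mem2_small 0 (by omega) i j hij]
  have hid := choose_id2 (n := n) (k := k) hk hkn
  have hc : (0 : ℝ) < (n.choose k : ℝ) := by exact_mod_cast Nat.choose_pos hkn
  have hn' : (0:ℝ) < (n:ℝ) := by exact_mod_cast (by omega : 1 ≤ n)
  have hn1 : (0:ℝ) < (n:ℝ) - 1 := by
    have : (2:ℝ) ≤ (n:ℝ) := by exact_mod_cast hn
    linarith
  simp only [Nat.cast_zero]
  field_simp
  linear_combination (-q) * hid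

lemma theta0_probGE (hk : 2 ≤ k) (hkn : k ≤ n) :
    probGE n (theta0 n k q r) k = q := by
  unfold probGE theta0
  rw [sum_reindex n (fun s => k ≤ s.card)
      (fun s => wt k (q / (n.choose k : ℝ)) (r / n) (1 - q - r) s.card),
    sum_wt hk, count_card_ge k, count_card_ge_small k 1 (by omega),
    count_card_ge_small k 0 (by omega)]
  have hc : (0 : ℝ) < (n.choose k : ℝ) := by exact_mod_cast Nat.choose_pos hkn
  field_simp
  simp

lemma theta0_nonneg (hq : 0 ≤ q) (hr : 0 ≤ r) (hz : q + r ≤ 1) (hn : 1 ≤ n)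
    (c : Fin n → Bool) : 0 ≤ theta0 n k q r c := by
  unfold theta0 wt
  have hn' : (0:ℝ) < (n:ℝ) := by exact_mod_cast hn
  split_ifs
  · positivity
  · positivity
  · linarith
  · exact le_refl 0

end Extremal
section Upper
variable {n k : ℕ} {p : ℝ} {θ : (Fin n → Bool) → ℝ}

/-- indicator as a real -/
noncomputable def ind (c : Fin n → Bool) (i : Fin n) : ℝ := if c i = true then 1 else 0

lemma S_eq_sum_ind (c : Fin n → Bool) :
    ((Finset.univ.filter (fun i => c i = true)).card : ℝ) = ∑ i, ind c i := by
  simp [ind, Finset.sum_boole]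

lemma pair_sum (hθ : PairwiseIndep n (fun _ => p) θ) (i j : Fin n) :
    ∑ c, θ c * ind c i * ind c j = if i = j then p else p ^ 2 := by
  obtain ⟨⟨hpos, hsum⟩, hmarg0, hbiv0⟩ := hθ
  have hmarg : ∀ i, Marg n θ i = p := fun i => hmarg0 i
  have hbiv : ∀ i j : Fin n, i < j → Biv n θ i j = p * p := fun i j h => hbiv0 i j h
  rcases eq_or_ne i j with rfl | hij
  · rw [if_pos rfl, ← hmarg i]
    unfold Marg
    rw [Finset.sum_filter]
    apply Finset.sum_congr rfl
    intro c _
    unfold ind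
    by_cases h : c i = true <;> simp [h]
  · rw [if_neg hij]
    have hbiv' : Biv n θ i j = p ^ 2 := by
      rcases lt_or_gt_of_ne hij with h | h
      · rw [hbiv i j h]; ring
      · have h2 := hbiv j i h
        have hsym : Biv n θ i j = Biv n θ j i := by
          unfold Biv
          congr 1
          apply Finset.filter_congr
          intro c _
          exact and_comm
        rw [hsym, h2]; ring
    rw [← hbiv']
    unfold Biv
    rw [Finset.sum_filter]
    apply Finset.sum_congr rfl
    intro c _
    unfold ind
    by_cases h1 : c i = true <;> by_cases h2 : c j = true <;> simp [h1, h2]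

lemma first_moment (hθ : PairwiseIndep n (fun _ => p) θ) :
    ∑ c, θ c * ((Finset.univ.filter (fun i => c i = true)).card : ℝ) = n * p := by
  obtain ⟨⟨hpos, hsum⟩, hmarg0, hbiv0⟩ := hθ
  have hmarg : ∀ i, Marg n θ i = p := fun i => hmarg0 i
  have : ∀ c : Fin n → Bool, θ c * ((Finset.univ.filter (fun i => c i = true)).card : ℝ)
      = ∑ i, θ c * ind c i := by
    intro c
    rw [S_eq_sum_ind, Finset.mul_sum]
  rw [Finset.sum_congr rfl (fun c _ => this c), Finset.sum_comm]
  have : ∀ i : Fin n, ∑ c, θ c * ind c i = p := by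
    intro i
    rw [← hmarg i]
    unfold Marg
    rw [Finset.sum_filter]
    apply Finset.sum_congr rfl
    intro c _
    unfold ind
    by_cases h : c i = true <;> simp [h]
  rw [Finset.sum_congr rfl (fun i _ => this i), Finset.sum_const, Finset.card_univ,
    Fintype.card_fin, nsmul_eq_mul]

lemma second_moment (hθ : PairwiseIndep n (fun _ => p) θ) :
    ∑ c, θ c * ((Finset.univ.filter (fun i => c i = true)).card : ℝ) ^ 2
      = n * p + (n * (n - 1) : ℝ) * p ^ 2 := by
  have step : ∀ c : Fin n → Bool,
      θ c * ((Finset.univ.filter (fun i => c i = true)).card : ℝ) ^ 2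
        = ∑ i, ∑ j, θ c * ind c i * ind c j := by
    intro c
    rw [S_eq_sum_ind, sq, Finset.sum_mul_sum]
    rw [Finset.mul_sum]
    apply Finset.sum_congr rfl
    intro i _
    rw [Finset.mul_sum]
    apply Finset.sum_congr rfl
    intro j _
    ring
  rw [Finset.sum_congr rfl (fun c _ => step c), Finset.sum_comm]
  have swap2 : ∀ i : Fin n, ∑ c : Fin n → Bool, ∑ j, θ c * ind c i * ind c j
      = ∑ j, ∑ c : Fin n → Bool, θ c * ind c i * ind c j := fun i => Finset.sum_comm
  rw [Finset.sum_congr rfl (fun i _ => swap2 i)]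
  rw [Finset.sum_congr rfl (fun i _ => Finset.sum_congr rfl
    (fun j _ => pair_sum hθ i j))]
  have inner : ∀ i : Fin n, ∑ j : Fin n, (if i = j then p else p ^ 2)
      = p + ((n : ℝ) - 1) * p ^ 2 := by
    intro i
    have : ∀ j : Fin n, (if i = j then p else p ^ 2)
        = p ^ 2 + (if i = j then p - p ^ 2 else 0) := by
      intro j
      rcases eq_or_ne i j with rfl | h
      · simp
      · simp [h]
    rw [Finset.sum_congr rfl (fun j _ => this j), Finset.sum_add_distrib,
      Finset.sum_const, Finset.sum_ite_eq Finset.univ i (fun _ => p - p ^ 2),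
      if_pos (Finset.mem_univ i), Finset.card_univ, Fintype.card_fin, nsmul_eq_mul]
    ring
  rw [Finset.sum_congr rfl (fun i _ => inner i), Finset.sum_const, Finset.card_univ,
    Fintype.card_fin, nsmul_eq_mul]
  ring

lemma upper_bound (hn : 1 ≤ n) (hk : 2 ≤ k) (hθ : PairwiseIndep n (fun _ => p) θ) :
    probGE n θ k ≤ (n : ℝ) * ((n : ℝ) - 1) * p ^ 2 / ((k : ℝ) * ((k : ℝ) - 1)) := by
  obtain ⟨⟨hpos, hsum⟩, hmarg, hbiv⟩ := hθ
  have hfac : ∑ c, θ c * (((Finset.univ.filter (fun i => c i = true)).card : ℝ) *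
      (((Finset.univ.filter (fun i => c i = true)).card : ℝ) - 1))
      = (n : ℝ) * ((n : ℝ) - 1) * p ^ 2 := by
    have h1 := first_moment ⟨⟨hpos, hsum⟩, hmarg, hbiv⟩
    have h2 := second_moment ⟨⟨hpos, hsum⟩, hmarg, hbiv⟩
    have : ∀ c : Fin n → Bool, θ c * (((Finset.univ.filter (fun i => c i = true)).card : ℝ) *
        (((Finset.univ.filter (fun i => c i = true)).card : ℝ) - 1))
        = θ c * ((Finset.univ.filter (fun i => c i = true)).card : ℝ) ^ 2
          - θ c * ((Finset.univ.filter (fun i => c i = true)).card : ℝ) := by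
      intro c; ring
    rw [Finset.sum_congr rfl (fun c _ => this c), Finset.sum_sub_distrib, h1, h2]
    ring
  have hkk : (0 : ℝ) < (k : ℝ) * ((k : ℝ) - 1) := by
    have : (2 : ℝ) ≤ (k : ℝ) := by exact_mod_cast hk
    nlinarith
  rw [le_div_iff₀ hkk, ← hfac]
  -- goal : probGE n θ k * (k * (k-1)) ≤ ∑ c, θ c * (S * (S - 1))
  unfold probGE
  rw [Finset.sum_mul]
  have hsub : Finset.univ.filter (fun c : Fin n → Bool =>
      k ≤ (Finset.univ.filter (fun i => c i = true)).card) ⊆ Finset.univ :=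
    Finset.filter_subset _ _
  calc ∑ c ∈ Finset.univ.filter (fun c : Fin n → Bool =>
        k ≤ (Finset.univ.filter (fun i => c i = true)).card), θ c * ((k:ℝ) * ((k:ℝ) - 1))
      ≤ ∑ c ∈ Finset.univ.filter (fun c : Fin n → Bool =>
        k ≤ (Finset.univ.filter (fun i => c i = true)).card),
          θ c * (((Finset.univ.filter (fun i => c i = true)).card : ℝ) *
            (((Finset.univ.filter (fun i => c i = true)).card : ℝ) - 1)) := by
        apply Finset.sum_le_sum
        intro c hc
        rw [Finset.mem_filter] at hc
        have hS : k ≤ (Finset.univ.filter (fun i => c i = true)).card := hc.2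
        have hSr : (k : ℝ) ≤ ((Finset.univ.filter (fun i => c i = true)).card : ℝ) := by
          exact_mod_cast hS
        have hk2 : (2:ℝ) ≤ (k:ℝ) := by exact_mod_cast hk
        apply mul_le_mul_of_nonneg_left _ (hpos c)
        nlinarith
    _ ≤ ∑ c, θ c * (((Finset.univ.filter (fun i => c i = true)).card : ℝ) *
            (((Finset.univ.filter (fun i => c i = true)).card : ℝ) - 1)) := by
        apply Finset.sum_le_sum_of_subset_of_nonneg hsub
        intro c _ _
        apply mul_nonneg (hpos c)
        rcases Nat.eq_zero_or_pos (Finset.univ.filter (fun i => c i = true)).card with h | h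
        · rw [h]; norm_num
        · have : (1:ℝ) ≤ ((Finset.univ.filter (fun i => c i = true)).card : ℝ) := by
            exact_mod_cast h
          nlinarith

end Upper
lemma main_case (n k : ℕ) (hn : 3 ≤ n) (p : ℝ) (hp0 : 0 < p) (hp1 : p < 1)
    (hk2 : 2 ≤ k) (hkn : k ≤ n)
    (h1 : ((n:ℝ) - 1) * p ≤ (k:ℝ) - 1)
    (h2 : (k:ℝ) * ((n:ℝ) * p - 1) ≤ (n:ℝ) * ((n:ℝ) - 1) * p ^ 2) :
    IsGreatest
      {x : ℝ | ∃ θ : (Fin n → Bool) → ℝ,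
        PairwiseIndep n (fun _ => p) θ ∧ probGE n θ k = x}
      ((n : ℝ) * ((n : ℝ) - 1) * p ^ 2 / ((k : ℝ) * ((k : ℝ) - 1))) := by
  have hnR : (3:ℝ) ≤ (n:ℝ) := by exact_mod_cast hn
  have hkR : (2:ℝ) ≤ (k:ℝ) := by exact_mod_cast hk2
  have hknR : (k:ℝ) ≤ (n:ℝ) := by exact_mod_cast hkn
  have hkk : (0:ℝ) < (k:ℝ) * ((k:ℝ) - 1) := by nlinarith
  have hk1 : (0:ℝ) < (k:ℝ) - 1 := by linarith
  have hkpos : (0:ℝ) < (k:ℝ) := by linarith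
  set q : ℝ := (n:ℝ) * ((n:ℝ) - 1) * p ^ 2 / ((k:ℝ) * ((k:ℝ) - 1)) with hq
  set r : ℝ := (n:ℝ) * p - (k:ℝ) * q with hr
  have hnnp : (0:ℝ) ≤ (n:ℝ) * ((n:ℝ) - 1) * p ^ 2 :=
    mul_nonneg (mul_nonneg (by linarith) (by linarith)) (sq_nonneg p)
  have hqnn : 0 ≤ q := div_nonneg hnnp (le_of_lt hkk)
  have hkq : (k:ℝ) * q = (n:ℝ) * ((n:ℝ) - 1) * p ^ 2 / ((k:ℝ) - 1) := by
    rw [hq]; field_simp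
  have hrnn : 0 ≤ r := by
    rw [hr, hkq, sub_nonneg, div_le_iff₀ hk1]
    have := mul_le_mul_of_nonneg_left h1 (show (0:ℝ) ≤ (n:ℝ) * p by positivity)
    nlinarith [this]
  have hqr : q + r ≤ 1 := by
    have : q + r = (n:ℝ) * p - ((k:ℝ) - 1) * q := by rw [hr]; ring
    rw [this]
    have hk1q : ((k:ℝ) - 1) * q = (n:ℝ) * ((n:ℝ) - 1) * p ^ 2 / (k:ℝ) := by
      rw [hq]; field_simp
    rw [hk1q]
    have key : (n:ℝ) * p - 1 ≤ (n:ℝ) * ((n:ℝ) - 1) * p ^ 2 / (k:ℝ) := by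
      rw [le_div_iff₀ hkpos]
      nlinarith [h2]
    linarith [key]
  constructor
  · refine ⟨theta0 n k q r, ⟨⟨⟨theta0_nonneg hqnn hrnn hqr (by omega), ?_⟩, ?_, ?_⟩, ?_⟩⟩
    · exact theta0_sum (by omega) hk2 hkn
    · intro i
      rw [theta0_marg (by omega) hk2 hkn i]
      have hnpos : (0:ℝ) < (n:ℝ) := by linarith
      rw [hr]
      field_simp
      ring
    · intro i j hij
      rw [theta0_biv (by omega) hk2 hkn i j (Fin.ne_of_lt hij)]
      rw [hq]
      have hnpos : (0:ℝ) < (n:ℝ) := by linarith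
      have hn1 : (0:ℝ) < (n:ℝ) - 1 := by linarith
      field_simp
    · exact theta0_probGE hk2 hkn
  · rintro x ⟨θ, hθ, rfl⟩
    exact upper_bound (by omega) hk2 hθ
theorem stmt_17 (n : ℕ) (hn : 3 ≤ n) (p : ℝ) (hp0 : 0 < p) (hp1 : p < 1) :
    (p ≤ 1 / ((n : ℝ) - 1) →
      ∀ k : ℕ, 2 ≤ k → k ≤ n →
        IsGreatest
          {x : ℝ | ∃ θ : (Fin n → Bool) → ℝ,
            PairwiseIndep n (fun _ => p) θ ∧ probGE n θ k = x}
          ((n : ℝ) * ((n : ℝ) - 1) * p ^ 2 / ((k : ℝ) * ((k : ℝ) - 1)))) ∧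
    (1 / ((n : ℝ) - 1) < p →
      ∀ k : ℕ, ⌈1 + ((n : ℝ) - 1) * p⌉ ≤ (k : ℤ) →
        (k : ℤ) ≤ ⌊(n : ℝ) * ((n : ℝ) - 1) * p ^ 2 / ((n : ℝ) * p - 1)⌋ →
        IsGreatest
          {x : ℝ | ∃ θ : (Fin n → Bool) → ℝ,
            PairwiseIndep n (fun _ => p) θ ∧ probGE n θ k = x}
          ((n : ℝ) * ((n : ℝ) - 1) * p ^ 2 / ((k : ℝ) * ((k : ℝ) - 1)))) := by
  have hnR : (3:ℝ) ≤ (n:ℝ) := by exact_mod_cast hn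
  have hn1 : (0:ℝ) < (n:ℝ) - 1 := by linarith
  constructor
  · intro hp k hk2 hkn
    have hkR : (2:ℝ) ≤ (k:ℝ) := by exact_mod_cast hk2
    have hknR : (k:ℝ) ≤ (n:ℝ) := by exact_mod_cast hkn
    have hple : p * ((n:ℝ) - 1) ≤ 1 := (le_div_iff₀ hn1).mp hp
    apply main_case n k hn p hp0 hp1 hk2 hkn
    · nlinarith
    · rcases le_or_gt ((n:ℝ) * p) 1 with h | h
      · nlinarith [sq_nonneg p]
      · nlinarith [mul_nonneg (show (0:ℝ) ≤ 1 - p * ((n:ℝ)-1) by linarith)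
          (show (0:ℝ) ≤ 1 - p by linarith), mul_le_mul_of_nonneg_right hknR
          (show (0:ℝ) ≤ (n:ℝ) * p - 1 by linarith)]
  · intro hp k hceil hfloor
    have hgt : 1 < p * ((n:ℝ) - 1) := (div_lt_iff₀ hn1).mp hp
    have hnp1 : (0:ℝ) < (n:ℝ) * p - 1 := by nlinarith
    have hcR : 1 + ((n:ℝ) - 1) * p ≤ (k:ℝ) := by
      have := Int.ceil_le.mp hceil
      exact_mod_cast this
    have hfR : (k:ℝ) ≤ (n:ℝ) * ((n:ℝ) - 1) * p ^ 2 / ((n:ℝ) * p - 1) := by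
      have := Int.le_floor.mp hfloor
      exact_mod_cast this
    have hk2 : 2 ≤ k := by
      have h2R : (2:ℝ) < (k:ℝ) := by nlinarith
      have : 2 < k := by exact_mod_cast h2R
      omega
    have hXn : (n:ℝ) * ((n:ℝ) - 1) * p ^ 2 / ((n:ℝ) * p - 1) ≤ (n:ℝ) := by
      rw [div_le_iff₀ hnp1]
      nlinarith [mul_nonneg (show (0:ℝ) ≤ p * ((n:ℝ)-1) - 1 by linarith)
        (show (0:ℝ) ≤ 1 - p by linarith)]
    have hkn : k ≤ n := by
      have : (k:ℝ) ≤ (n:ℝ) := le_trans hfR hXn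
      exact_mod_cast this
    apply main_case n k hn p hp0 hp1 hk2 hkn
    · linarith
    · exact (le_div_iff₀ hnp1).mp hfR
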